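/- arXiv:2509.11137 — 5 statements merged into one kernel-verified Lean document; each statement's English description precedes it below -/
import Mathlib

section
/- Let n1, n2 be coprime integers with 3 | n1, and set Δ = n1^2 + 3·n1·n2 + 9·n2^2. If 9 exactly divides Δ (i.e. 9 | Δ but 27 ∤ Δ) and Δ/9 is squarefree, then Δ/9 and 2·n1 + 3·n2 are coprime. -/
/-- If `n1, n2` are coprime integers with `3 ∣ n1`, `Δ = n1^2 + 3 n1 n2 + 9 n2^2`
satisfies `9 ∥ Δ` and `Δ/9` squarefree, then `Δ/9` and `2 n1 + 3 n2` are coprime. -/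
theorem delta_div_nine_coprime (n1 n2 : ℤ) (hcop : IsCoprime n1 n2) (h3 : (3 : ℤ) ∣ n1)
    (Δ : ℤ) (hΔ : Δ = n1 ^ 2 + 3 * n1 * n2 + 9 * n2 ^ 2)
    (h9 : (9 : ℤ) ∣ Δ) (h27 : ¬ (27 : ℤ) ∣ Δ) (hsf : Squarefree (Δ / 9)) :
    IsCoprime (Δ / 9) (2 * n1 + 3 * n2) := by
  obtain ⟨m, hm⟩ := h3
  set D : ℤ := m ^ 2 + m * n2 + n2 ^ 2 with hD
  have hΔ9 : Δ = 9 * D := by subst hm hΔ; ring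
  have hdiv : Δ / 9 = D := by rw [hΔ9]; exact Int.mul_ediv_cancel_left _ (by norm_num)
  rw [hdiv]
  have h3D : ¬ (3 : ℤ) ∣ D := by
    rintro ⟨k, hk⟩
    exact h27 ⟨k, by rw [hΔ9, hk]; ring⟩
  have hcm : IsCoprime m n2 := (IsCoprime.of_mul_left_right (by rwa [hm] at hcop))
  have hE : 2 * n1 + 3 * n2 = 3 * (2 * m + n2) := by rw [hm]; ring
  rw [hE]
  -- no prime divides both
  have key : ∀ p : ℤ, Prime p → p ∣ D → ¬ p ∣ 3 * (2 * m + n2) := by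
    intro p hp hpD hpE
    rcases hp.dvd_mul.mp hpE with h | hpe
    · -- p ∣ 3, so 3 ∣ D
      have hna : p.natAbs ∣ 3 := by
        have := Int.natAbs_dvd_natAbs.mpr h; simpa using this
      have hp3 : p.natAbs = 3 :=
        ((Nat.prime_three).eq_one_or_self_of_dvd _ hna).resolve_left
          (Int.prime_iff_natAbs_prime.mp hp).ne_one
      have : (3 : ℤ) ∣ D := by
        have := Int.natAbs_dvd.mpr hpD
        rwa [hp3] at this
      exact h3D this
    · -- p ∣ 2m + n2
      have h1 : p ∣ 3 * n2 ^ 2 := by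
        have heq : 3 * n2 ^ 2 = 4 * D - (2 * m + n2) ^ 2 := by rw [hD]; ring
        rw [heq]
        exact dvd_sub (hpD.mul_left 4) (dvd_pow hpe two_ne_zero)
      rcases hp.dvd_mul.mp h1 with h | h
      · have hna : p.natAbs ∣ 3 := by
          have := Int.natAbs_dvd_natAbs.mpr h; simpa using this
        have hp3 : p.natAbs = 3 :=
          ((Nat.prime_three).eq_one_or_self_of_dvd _ hna).resolve_left
            (Int.prime_iff_natAbs_prime.mp hp).ne_one
        have : (3 : ℤ) ∣ D := by
          have := Int.natAbs_dvd.mpr hpD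
          rwa [hp3] at this
        exact h3D this
      · have hpn2 : p ∣ n2 := hp.dvd_of_dvd_pow h
        have hpm2 : p ∣ m ^ 2 := by
          have heq : m ^ 2 = D - (m * n2 + n2 ^ 2) := by rw [hD]; ring
          rw [heq]
          exact dvd_sub hpD (dvd_add (hpn2.mul_left m) (dvd_pow hpn2 two_ne_zero))
        have hpm : p ∣ m := hp.dvd_of_dvd_pow hpm2
        exact hp.not_unit (hcm.isUnit_of_dvd' hpm hpn2)
  rw [Int.isCoprime_iff_gcd_eq_one]
  by_contra hg
  obtain ⟨p, hpp, hpg⟩ := Nat.exists_prime_and_dvd hg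
  have hpZ : Prime (p : ℤ) := Nat.prime_iff_prime_int.mp hpp
  have hgd : ((Int.gcd D (3 * (2 * m + n2)) : ℕ) : ℤ) ∣ D := Int.gcd_dvd_left _ _
  have hge : ((Int.gcd D (3 * (2 * m + n2)) : ℕ) : ℤ) ∣ 3 * (2 * m + n2) := Int.gcd_dvd_right _ _
  have hpd : (p : ℤ) ∣ D := (Int.natCast_dvd_natCast.mpr hpg).trans hgd
  have hpe : (p : ℤ) ∣ 3 * (2 * m + n2) := (Int.natCast_dvd_natCast.mpr hpg).trans hge
  exact key _ hpZ hpd hpe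
end

section
/- Let n1, n2 be coprime integers with 3 | n1, set n = n1/n2 and Δ = n1^2 + 3·n1·n2 + 9·n2^2. If 9 exactly divides Δ and Δ/9 is squarefree, then Shanks' cubic polynomial f_n(X) = X^3 - nX^2 - (n+3)X - 1 is irreducible over ℚ. -/
open Polynomial

/-- Under the hypotheses `gcd(n1,n2)=1`, `3 ∣ n1`, `9 ∥ Δ`, `Δ/9` squarefree,
Shanks' cubic polynomial `f_n` with `n = n1/n2` is irreducible over `ℚ`. -/
theorem shanks_cubic_irreducible (n1 n2 : ℤ) (hn2 : n2 ≠ 0) (hcop : IsCoprime n1 n2)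
    (h3 : (3 : ℤ) ∣ n1) (Δ : ℤ) (hΔ : Δ = n1 ^ 2 + 3 * n1 * n2 + 9 * n2 ^ 2)
    (h9 : (9 : ℤ) ∣ Δ) (h27 : ¬ (27 : ℤ) ∣ Δ) (hsf : Squarefree (Δ / 9))
    (n : ℚ) (hn : n = (n1 : ℚ) / (n2 : ℚ)) :
    Irreducible (X ^ 3 - C n * X ^ 2 - C (n + 3) * X - 1) := by
  set p : ℚ[X] := X ^ 3 - C n * X ^ 2 - C (n + 3) * X - 1 with hp
  have hmonic : p.Monic := by unfold p; monicity!
  have hdeg : p.natDegree = 3 := by unfold p; compute_degree!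
  rw [hmonic.irreducible_iff_roots_eq_zero_of_degree_le_three (by omega) (by omega)]
  by_contra hroots
  obtain ⟨r, hr⟩ := Multiset.exists_mem_of_ne_zero hroots
  rw [mem_roots hmonic.ne_zero] at hr
  have hr0 : r ^ 3 - n * r ^ 2 - (n + 3) * r - 1 = 0 := by
    simpa [p, IsRoot] using hr
  set a : ℤ := r.num with ha
  set b : ℤ := (r.den : ℤ) with hb
  have hbpos : 0 < b := by rw [hb]; exact_mod_cast r.pos
  have hbq : (b : ℚ) ≠ 0 := by positivity
  have hn2q : (n2 : ℚ) ≠ 0 := Int.cast_ne_zero.mpr hn2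
  have hab : IsCoprime a b :=
    Int.isCoprime_iff_gcd_eq_one.mpr r.reduced
  have hr' : (r : ℚ) = (a : ℚ) / (b : ℚ) := by
    rw [ha, hb]; push_cast; exact (Rat.num_div_den r).symm
  have keyQ : (n2 : ℚ) * ((a:ℚ)^3 - 3*a*b^2 - b^3) = (n1:ℚ) * (a*b*(a+b)) := by
    have e : (n2 : ℚ) * ((a:ℚ)^3 - 3*a*b^2 - b^3) - (n1:ℚ) * (a*b*(a+b))
        = n2 * b^3 * (r ^ 3 - n * r ^ 2 - (n + 3) * r - 1) := by
      rw [hn, hr']; field_simp; ring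
    rw [hr0, mul_zero] at e
    linarith [e]
  have key : n2 * (a^3 - 3*a*b^2 - b^3) = n1 * (a*b*(a+b)) := by exact_mod_cast keyQ
  set G : ℤ := a^3 - 3*a*b^2 - b^3 with hG
  set H : ℤ := a*b*(a+b) with hH
  -- coprimality of G with a, b, a+b
  have hGa : IsCoprime G a := by
    have h := ((hab.symm.pow_left (m := 3)).neg_left).add_mul_left_left (a^2 - 3*b^2)
    have : -b^3 + a * (a^2 - 3*b^2) = G := by rw [hG]; ring
    rwa [this] at h
  have hGb : IsCoprime G b := by
    have h := (hab.pow_left (m := 3)).add_mul_left_left (-3*a*b - b^2)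
    have : a^3 + b * (-3*a*b - b^2) = G := by rw [hG]; ring
    rwa [this] at h
  have hbab : IsCoprime (b^3) (a+b) := by
    have h := (hab.symm.add_mul_left_right 1).pow_left (m := 3)
    simpa using h
  have hGab : IsCoprime G (a+b) := by
    have h := hbab.add_mul_left_left (a^2 - a*b - 2*b^2)
    have : b^3 + (a+b) * (a^2 - a*b - 2*b^2) = G := by rw [hG]; ring
    rwa [this] at h
  have hGH : IsCoprime G H := by
    rw [hH]; exact (hGa.mul_right hGb).mul_right hGab
  have hn1G : n1 ∣ G := hcop.dvd_of_dvd_mul_left ⟨H, key⟩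
  have hGn1 : G ∣ n1 := hGH.dvd_of_dvd_mul_right ⟨n2, by rw [← key]; ring⟩
  have hGne : G ≠ 0 := by
    intro h0
    have hua : IsUnit a := isCoprime_zero_left.mp (h0 ▸ hGa)
    have hub : IsUnit b := isCoprime_zero_left.mp (h0 ▸ hGb)
    rw [Int.isUnit_iff] at hua hub
    have hb1 : b = 1 := by omega
    rw [hG, hb1] at h0
    rcases hua with h1 | h1 <;> rw [h1] at h0 <;> norm_num at h0
  have hass : n1 = G ∨ n1 = -G := Int.associated_iff.mp (associated_of_dvd_dvd hn1G hGn1)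
  have hmcube : Δ = (a^2 + a*b + b^2)^3 := by
    rcases hass with h1 | h1
    · have h2 : n2 = H := by
        have : G * n2 = G * H := by rw [← h1] at key ⊢; linarith [key]
        exact mul_left_cancel₀ hGne this
      rw [hΔ, h1, h2, hG, hH]; ring
    · have h2 : n2 = -H := by
        have : G * n2 = G * (-H) := by rw [h1] at key; linarith [key]
        exact mul_left_cancel₀ hGne this
      rw [hΔ, h1, h2, hG, hH]; ring
  have h3m : (3 : ℤ) ∣ (a^2 + a*b + b^2) := by
    have h3cube : (3 : ℤ) ∣ (a^2 + a*b + b^2)^3 := by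
      rw [← hmcube]; exact dvd_trans ⟨3, by norm_num⟩ h9
    exact Int.Prime.dvd_pow' (by norm_num) h3cube
  obtain ⟨k, hk⟩ := h3m
  exact h27 ⟨k^3, by rw [hmcube, hk]; ring⟩
end

section
/- For coprime integers n1, n2 with n2 ≠ 0 and n = n1/n2, the polynomial identity (3·n2)^3 · f_n(X/(3·n2) + n/3) = X^3 - 3·Δ·X - (2·n1 + 3·n2)·Δ holds in ℚ[X], where Δ = n1^2 + 3·n1·n2 + 9·n2^2. -/
open Polynomial

/-- The identity `(3 n2)^3 · f_n(X/(3 n2) + n/3) = X^3 - 3Δ·X - (2 n1 + 3 n2)·Δ`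
in `ℚ[X]`, for `n = n1/n2` and `Δ = n1^2 + 3 n1 n2 + 9 n2^2`. -/
theorem shanks_cubic_transform (n1 n2 : ℤ) (hn2 : n2 ≠ 0) (hcop : IsCoprime n1 n2)
    (n : ℚ) (hn : n = (n1 : ℚ) / (n2 : ℚ))
    (Δ : ℤ) (hΔ : Δ = n1 ^ 2 + 3 * n1 * n2 + 9 * n2 ^ 2) :
    C ((3 * n2 : ℤ) : ℚ) ^ 3 *
      (X ^ 3 - C n * X ^ 2 - C (n + 3) * X - 1).comp
        (C (1 / ((3 * n2 : ℤ) : ℚ)) * X + C (n / 3)) =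
      X ^ 3 - C (3 * (Δ : ℚ)) * X - C (((2 * n1 + 3 * n2 : ℤ) : ℚ) * (Δ : ℚ)) := by
  have h2 : (n2:ℚ) ≠ 0 := Int.cast_ne_zero.mpr hn2
  apply Polynomial.funext
  intro x
  simp only [hn, hΔ, eval_mul, eval_pow, eval_comp, eval_add, eval_sub, eval_C, eval_X, eval_one]
  push_cast
  field_simp
  ring
end

section
/- Let p be an odd prime and let ζ_p be a primitive p-th root of unity. The ring homomorphism ψ : ℤ[X]/(X^p - 1) → ℤ[ζ_p] sending the class of X to ζ_p restricts to an injective group homomorphism on unit groups (ℤ[X]/(X^p - 1))^× → ℤ[ζ_p]^×. -/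
open Polynomial

/-- For an odd prime `p` and a primitive `p`-th root of unity `ζ ∈ ℂ`, the ring
homomorphism `ℤ[X]/(X^p - 1) → ℂ` sending the class of `X` to `ζ` induces an
injective group homomorphism on unit groups. -/
theorem units_map_injective_of_cyclotomic_quotient (p : ℕ) (hp : p.Prime) (hodd : p ≠ 2)
    (ζ : ℂ) (hζ : IsPrimitiveRoot ζ p)
    (ψ : (Polynomial ℤ ⧸ Ideal.span {(X : Polynomial ℤ) ^ p - 1}) →+* ℂ)
    (hψ : ψ (Ideal.Quotient.mk (Ideal.span {(X : Polynomial ℤ) ^ p - 1}) X) = ζ) :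
    Function.Injective (Units.map ψ.toMonoidHom) := by
  haveI : Fact p.Prime := ⟨hp⟩
  -- evaluation at 1 descends to the quotient
  have hle : Ideal.span {(X : Polynomial ℤ) ^ p - 1} ≤ RingHom.ker (evalRingHom (1 : ℤ)) := by
    rw [Ideal.span_le]
    intro x hx
    simp only [Set.mem_singleton_iff] at hx
    simp [hx, RingHom.mem_ker]
  set ε : (Polynomial ℤ ⧸ Ideal.span {(X : Polynomial ℤ) ^ p - 1}) →+* ℤ :=
    Ideal.Quotient.lift _ (evalRingHom 1) (fun a ha => hle ha) with hε
  -- ψ ∘ mk = aeval ζ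
  have hcomp : ∀ f : Polynomial ℤ,
      ψ (Ideal.Quotient.mk (Ideal.span {(X : Polynomial ℤ) ^ p - 1}) f) = aeval ζ f := by
    intro f
    have : ψ.comp (Ideal.Quotient.mk (Ideal.span {(X : Polynomial ℤ) ^ p - 1}))
        = (aeval ζ).toRingHom := by
      apply Polynomial.ringHom_ext
      · intro a
        simp [eq_intCast]
      · simpa using hψ
    exact congrArg (fun g : Polynomial ℤ →+* ℂ => g f) this
  intro u v huv
  -- reduce to: w a unit with ψ w = 1 implies w = 1
  have key : ∀ w : (Polynomial ℤ ⧸ Ideal.span {(X : Polynomial ℤ) ^ p - 1})ˣ,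
      ψ (w : Polynomial ℤ ⧸ Ideal.span {(X : Polynomial ℤ) ^ p - 1}) = 1 → w = 1 := by
    intro w hw
    obtain ⟨f, hf⟩ := Ideal.Quotient.mk_surjective
      (w : Polynomial ℤ ⧸ Ideal.span {(X : Polynomial ℤ) ^ p - 1})
    have hfζ : aeval ζ (f - 1) = 0 := by
      rw [map_sub, ← hcomp, hf, hw, map_one, sub_self]
    -- cyclotomic p divides f - 1
    have hdvd : cyclotomic p ℤ ∣ f - 1 := by
      rw [cyclotomic_eq_minpoly hζ hp.pos]
      exact minpoly.isIntegrallyClosed_dvd (hζ.isIntegral hp.pos) hfζ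
    obtain ⟨g, hg⟩ := hdvd
    -- ε w is a unit of ℤ
    have hεu : IsUnit (ε (w : Polynomial ℤ ⧸ Ideal.span {(X : Polynomial ℤ) ^ p - 1})) :=
      (w.isUnit).map ε
    have hεval : ε (w : Polynomial ℤ ⧸ Ideal.span {(X : Polynomial ℤ) ^ p - 1}) = f.eval 1 := by
      rw [← hf]; simp [hε]
      exact Ideal.Quotient.lift_mk ..
    have hfeval : f.eval 1 = 1 + p * g.eval 1 := by
      have := congrArg (eval (1 : ℤ)) hg
      simp only [eval_sub, eval_one, eval_mul] at this
      rw [eval_one_cyclotomic_prime] at this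
      omega
    have hε1 : f.eval 1 = 1 ∨ f.eval 1 = -1 := by
      rcases Int.isUnit_iff.mp (hεval ▸ hεu) with h | h
      · exact Or.inl h
      · exact Or.inr h
    have hg1 : g.eval 1 = 0 := by
      rcases hε1 with h | h
      · rw [h] at hfeval
        have hp0 : (p : ℤ) ≠ 0 := by exact_mod_cast hp.ne_zero
        have : (p : ℤ) * g.eval 1 = 0 := by omega
        exact (mul_eq_zero.mp this).resolve_left hp0
      · exfalso
        rw [h] at hfeval
        have h2 : (p : ℤ) ∣ 2 := ⟨-g.eval 1, by linarith⟩
        have h2' : p ∣ 2 := by exact_mod_cast h2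
        exact hodd ((Nat.prime_dvd_prime_iff_eq hp Nat.prime_two).mp h2')
    -- X - 1 divides g
    have hXg : (X : Polynomial ℤ) - 1 ∣ g := by
      have := dvd_iff_isRoot.mpr (show IsRoot g 1 from hg1)
      simpa using this
    obtain ⟨h, hh⟩ := hXg
    have hfin : f - 1 = ((X : Polynomial ℤ) ^ p - 1) * h := by
      calc f - 1 = (cyclotomic p ℤ * ((X : Polynomial ℤ) - 1)) * h := by rw [hg, hh]; ring
        _ = ((X : Polynomial ℤ) ^ p - 1) * h := by rw [cyclotomic_prime_mul_X_sub_one]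
    have hmem : f - 1 ∈ Ideal.span {(X : Polynomial ℤ) ^ p - 1} := by
      rw [hfin]
      exact Ideal.mul_mem_right _ _ (Ideal.subset_span rfl)
    have hmk : Ideal.Quotient.mk (Ideal.span {(X : Polynomial ℤ) ^ p - 1}) f = 1 := by
      have := (Ideal.Quotient.eq).mpr hmem
      simpa using this
    ext
    rw [← hf, hmk, Units.val_one]
  -- finish
  have h1 : Units.map ψ.toMonoidHom (u * v⁻¹) = 1 := by
    rw [map_mul, map_inv, huv, mul_inv_cancel]
  have h2 : ψ ((u * v⁻¹ :
      (Polynomial ℤ ⧸ Ideal.span {(X : Polynomial ℤ) ^ p - 1})ˣ) :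
      Polynomial ℤ ⧸ Ideal.span {(X : Polynomial ℤ) ^ p - 1}) = 1 := by
    have := congrArg (fun x : ℂˣ => (x : ℂ)) h1
    simpa using this
  have h3 : u * v⁻¹ = 1 := key (u * v⁻¹) h2
  calc u = u * v⁻¹ * v := by group
    _ = v := by rw [h3, one_mul]
end

section
/- The Gauss sum of the cubic character χ of conductor 9 defined by χ(a) = ζ_3^{(a^2-1)/3} for a coprime to 3 satisfies τ(χ)^3 = 27·ζ_3, where τ(χ) = ∑_{a ∈ (ℤ/9ℤ)^×} χ(a)·ζ_9^a and ζ_9 = e^{2πi/9}. -/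
/-- The Gauss sum of the cubic character `χ` of conductor `9` given by
`χ(a) = ζ₃^{(a²-1)/3}` satisfies `τ(χ)³ = 27 ζ₃`, where `ζ₃ = ζ₉³`. -/
theorem gauss_sum_conductor_nine (ζ9 : ℂ) (hζ9 : IsPrimitiveRoot ζ9 9)
    (τ : ℂ)
    (hτ : τ = ∑ u : (ZMod 9)ˣ,
      (ζ9 ^ 3) ^ (((u : ZMod 9).val ^ 2 - 1) / 3) * ζ9 ^ (u : ZMod 9).val) :
    τ ^ 3 = 27 * ζ9 ^ 3 := by
  have h9 : ζ9 ^ 9 = 1 := hζ9.pow_eq_one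
  have h3prim : IsPrimitiveRoot (ζ9 ^ 3) 3 := hζ9.pow (by norm_num) (by norm_num)
  have h3ne : ζ9 ^ 3 ≠ 1 := h3prim.ne_one (by norm_num)
  have h3cube : (ζ9 ^ 3) ^ 3 = 1 := h3prim.pow_eq_one
  have h3 : 1 + ζ9 ^ 3 + ζ9 ^ 6 = 0 := by
    have := mul_eq_zero.mp (show (ζ9 ^ 3 - 1) * (1 + ζ9 ^ 3 + ζ9 ^ 6) = 0 by
      linear_combination h3cube)
    rcases this with h | h
    · exact absurd (show ζ9 ^ 3 = 1 by linear_combination h) h3ne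
    · exact h
  have hinj : ∀ x : (ZMod 9)ˣ, x ∈ (Finset.univ : Finset (ZMod 9)ˣ) →
      ∀ y : (ZMod 9)ˣ, y ∈ (Finset.univ : Finset (ZMod 9)ˣ) →
      (x : ZMod 9).val = (y : ZMod 9).val → x = y := by decide
  have himg : (Finset.univ : Finset (ZMod 9)ˣ).image (fun u : (ZMod 9)ˣ => (u : ZMod 9).val)
      = ({1, 2, 4, 5, 7, 8} : Finset ℕ) := by decide
  rw [hτ,
    show (∑ u : (ZMod 9)ˣ, (ζ9 ^ 3) ^ (((u : ZMod 9).val ^ 2 - 1) / 3) * ζ9 ^ (u : ZMod 9).val)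
      = ∑ n ∈ (Finset.univ : Finset (ZMod 9)ˣ).image (fun u : (ZMod 9)ˣ => (u : ZMod 9).val),
          (ζ9 ^ 3) ^ ((n ^ 2 - 1) / 3) * ζ9 ^ n from (Finset.sum_image (g := fun u : (ZMod 9)ˣ => (u : ZMod 9).val) (f := fun n => (ζ9 ^ 3) ^ ((n ^ 2 - 1) / 3) * ζ9 ^ n) hinj).symm,
    himg]
  norm_num [Finset.sum_insert, Finset.mem_insert]
  have hS : ζ9 +
        (ζ9 ^ 3 * ζ9 ^ 2 +
          ((ζ9 ^ 3) ^ 5 * ζ9 ^ 4 + ((ζ9 ^ 3) ^ 8 * ζ9 ^ 5 + ((ζ9 ^ 3) ^ 16 * ζ9 ^ 7 + (ζ9 ^ 3) ^ 21 * ζ9 ^ 8))))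
      = 3 * ζ9 := by
    linear_combination (ζ9 * (ζ9 ^ 9 + 1) + ζ9 ^ 2 * (ζ9 ^ 18 + ζ9 ^ 9 + 1)
      + ζ9 * (ζ9 ^ 45 + ζ9 ^ 36 + ζ9 ^ 27 + ζ9 ^ 18 + ζ9 ^ 9 + 1)
      + ζ9 ^ 8 * (ζ9 ^ 54 + ζ9 ^ 45 + ζ9 ^ 36 + ζ9 ^ 27 + ζ9 ^ 18 + ζ9 ^ 9 + 1)) * h9
      + ζ9 ^ 2 * h3
  rw [hS]; ring
end
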